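/- First Taylor coefficient of D(q,s,A): let n be a finite type and s, A n×n complex matrices with 1 − s invertible. Then the function q ↦ det(1 − s·exp(qA)) has derivative −det(1 − s) · trace((1 − s)⁻¹ · s · A) at q = 0, and its value at q = 0 is det(1 − s). -/

import Mathlib

open Matrix

attribute [local instance] Matrix.linftyOpNormedRing Matrix.linftyOpNormedAlgebra

/-- Algebraic identity: the trace of `adjugate M * M'` is the sum of determinants of `M`
with column `i` replaced by column `i` of `M'`. -/
lemma traceAux15 {n : Type*} [Fintype n] [DecidableEq n] (M M' : Matrix n n ℂ) :
    (adjugate M * M').trace = ∑ i, (M.updateCol i fun k => M' k i).det := by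
  rw [Matrix.trace]
  refine Finset.sum_congr rfl fun i _ => ?_
  rw [← Matrix.cramer_apply, Matrix.cramer_eq_adjugate_mulVec]
  simp [Matrix.diag, Matrix.mul_apply, Matrix.mulVec, dotProduct]

/-- Derivative of the determinant along a curve of matrices. -/
lemma detDerivAux15 {n : Type*} [Fintype n] [DecidableEq n]
    {f : ℂ → Matrix n n ℂ} (M' : Matrix n n ℂ) (q : ℂ)
    (hf : ∀ i j, HasDerivAt (fun t => f t i j) (M' i j) q) :
    HasDerivAt (fun t => (f t).det) ((adjugate (f q) * M').trace) q := by
  have h1 : (fun t => (f t).det) = fun t =>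
      ∑ σ : Equiv.Perm n, ((Equiv.Perm.sign σ : ℤ) : ℂ) * ∏ i, f t (σ i) i := by
    funext t; rw [Matrix.det_apply']
  rw [h1]
  have key : HasDerivAt (fun t => ∑ σ : Equiv.Perm n,
      ((Equiv.Perm.sign σ : ℤ) : ℂ) * ∏ i, f t (σ i) i)
      (∑ σ : Equiv.Perm n, ((Equiv.Perm.sign σ : ℤ) : ℂ) *
        ∑ i, (∏ j ∈ Finset.univ.erase i, f q (σ j) j) • M' (σ i) i) q := by
    refine HasDerivAt.fun_sum fun σ _ => ?_
    exact (HasDerivAt.fun_finsetProd fun i _ => hf (σ i) i).const_mul _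
  convert key using 1
  rw [traceAux15]
  have hdet : ∀ i : n, (Matrix.updateCol (f q) i fun k => M' k i).det
      = ∑ σ : Equiv.Perm n, ((Equiv.Perm.sign σ : ℤ) : ℂ) *
        (M' (σ i) i * ∏ j ∈ Finset.univ.erase i, f q (σ j) j) := by
    intro i
    rw [Matrix.det_apply']
    refine Finset.sum_congr rfl fun σ _ => ?_
    congr 1
    have : ∀ j : n, (Matrix.updateCol (f q) i fun k => M' k i) (σ j) j
        = Function.update (fun j => f q (σ j) j) i (M' (σ i) i) j := by
      intro j
      rw [Matrix.updateCol_apply, Function.update_apply]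
      by_cases h : j = i <;> simp [h]
    rw [Finset.prod_congr rfl fun j _ => this j,
      Finset.prod_update_of_mem (Finset.mem_univ i), Finset.sdiff_singleton_eq_erase]
  simp only [hdet, Finset.mul_sum, smul_eq_mul]
  rw [Finset.sum_comm]
  refine Finset.sum_congr rfl fun σ _ => Finset.sum_congr rfl fun i _ => ?_
  ring

/-- First Taylor coefficient of `D(q,s,A) = det(1 - s e^{qA})`: its value at `q = 0`
is `det(1 - s)` and its derivative at `q = 0` is `-det(1 - s)·Tr((1 - s)⁻¹ s A)`. -/
theorem stmt15 {n : Type*} [Fintype n] [DecidableEq n] (s A : Matrix n n ℂ)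
    (hs : IsUnit (1 - s)) :
    HasDerivAt (fun q : ℂ => (1 - s * NormedSpace.exp (q • A)).det)
        (-(1 - s).det * ((1 - s)⁻¹ * s * A).trace) 0 ∧
      (fun q : ℂ => (1 - s * NormedSpace.exp (q • A)).det) 0 = (1 - s).det := by
  have hval : (fun q : ℂ => (1 - s * NormedSpace.exp (q • A)).det) 0 = (1 - s).det := by
    simp [NormedSpace.exp_zero]
  refine ⟨?_, hval⟩
  -- matrix-level derivative of `q ↦ 1 - s * exp (q • A)` at 0
  have hexp : HasDerivAt (fun t : ℂ => NormedSpace.exp (t • A)) A 0 := by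
    have h := hasDerivAt_exp_smul_const (𝕂 := ℂ) A 0
    simp at h
    exact h
  have hg : HasDerivAt (fun t : ℂ => 1 - s * NormedSpace.exp (t • A)) (-(s * A)) 0 := by
    exact (hexp.const_mul s).const_sub 1
  -- entrywise derivatives
  have hentry : ∀ i j, HasDerivAt (fun t : ℂ => (1 - s * NormedSpace.exp (t • A)) i j)
      ((-(s * A)) i j) 0 := by
    intro i j
    have hL := (LinearMap.toContinuousLinearMap
      (Matrix.entryLinearMap ℂ ℂ i j : Matrix n n ℂ →ₗ[ℂ] ℂ)).hasFDerivAt.comp_hasDerivAt 0 hg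
    exact hL
  have hD := detDerivAux15 (f := fun t : ℂ => 1 - s * NormedSpace.exp (t • A))
    (-(s * A)) 0 hentry
  have hf0 : (1 - s * NormedSpace.exp ((0 : ℂ) • A)) = 1 - s := by
    simp [NormedSpace.exp_zero]
  simp only [hf0] at hD
  convert hD using 1
  -- identify the trace expression
  have hdetu : IsUnit (1 - s).det := (Matrix.isUnit_iff_isUnit_det _).mp hs
  have hadj : adjugate (1 - s) = (1 - s).det • (1 - s)⁻¹ := by
    rw [Matrix.inv_def, smul_smul, Ring.inverse_eq_inv,
      mul_inv_cancel₀ hdetu.ne_zero, one_smul]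
  rw [hadj, smul_mul_assoc, Matrix.trace_smul, mul_neg, Matrix.trace_neg, ← mul_assoc,
    smul_eq_mul]
  ring
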